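/- Let τ > 0, 0 < β < 1, N' > 0 and q ≥ 0, and let X be a real Banach space. Let S(t,s) ∈ L(X) be defined for 0 ≤ s < t ≤ τ with ‖S(t,s)‖ ≤ N'·(t−s)^{−β}, such that for each fixed t the map r ↦ S(t,r)x is continuous on [0,t) for every x ∈ X. Let Q(r,s) ∈ L(X) (0 ≤ s ≤ r ≤ τ) be a family with (r,s) ↦ Q(r,s)x continuous for every x ∈ X and ‖Q(r,s)‖ ≤ q. Then for all 0 ≤ s < t ≤ τ and all x ∈ X, the Bochner integral ∫ₛᵗ S(t,r)Q(r,s)x dr exists and ‖S(t,s)x + ∫ₛᵗ S(t,r)Q(r,s)x dr‖ ≤ ((1 + qτ)N'/(1−β)) · (t−s)^{−β} · ‖x‖. -/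

import Mathlib

open MeasureTheory

/-- If `‖S(t,s)‖ ≤ N'·(t−s)^{−β}` and `‖Q(r,s)‖ ≤ q`, then the Bochner
integral `∫ₛᵗ S(t,r)Q(r,s)x dr` exists and
`‖S(t,s)x + ∫ₛᵗ S(t,r)Q(r,s)x dr‖ ≤ ((1 + qτ)N'/(1−β))·(t−s)^{−β}·‖x‖`. -/
theorem stmt_3
    {X : Type*} [NormedAddCommGroup X] [NormedSpace ℝ X] [CompleteSpace X]
    (τ : ℝ) (hτ : 0 < τ)
    (β : ℝ) (hβ0 : 0 < β) (hβ1 : β < 1)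
    (N' : ℝ) (hN' : 0 < N') (q : ℝ) (hq : 0 ≤ q)
    (S : ℝ → ℝ → X →L[ℝ] X) (Q : ℝ → ℝ → X →L[ℝ] X)
    -- norm bound on S on {0 ≤ s < t ≤ τ}
    (hS_bound : ∀ t s : ℝ, 0 ≤ s → s < t → t ≤ τ → ‖S t s‖ ≤ N' * (t - s) ^ (-β))
    -- for each fixed t, r ↦ S(t,r)x is continuous on [0, t)
    (hS_cont : ∀ t : ℝ, ∀ x : X, ContinuousOn (fun r => S t r x) (Set.Ico 0 t))
    -- Q is strongly continuous on the triangle and uniformly bounded by q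
    (hQ_strong : ∀ x : X, ContinuousOn (fun p : ℝ × ℝ => Q p.1 p.2 x)
      {p : ℝ × ℝ | 0 ≤ p.2 ∧ p.2 ≤ p.1 ∧ p.1 ≤ τ})
    (hQ_bound : ∀ r s : ℝ, 0 ≤ s → s ≤ r → r ≤ τ → ‖Q r s‖ ≤ q) :
    ∀ s t : ℝ, 0 ≤ s → s < t → t ≤ τ → ∀ x : X,
      IntervalIntegrable (fun r => S t r (Q r s x)) volume s t ∧
      ‖S t s x + ∫ r in s..t, S t r (Q r s x)‖ ≤
        ((1 + q * τ) * N' / (1 - β)) * (t - s) ^ (-β) * ‖x‖ := by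
  intro s t hs hst htτ x
  have hts : 0 < t - s := sub_pos.2 hst
  have h1β : 0 < 1 - β := by linarith
  set y : ℝ → X := fun r => Q r s x with hy
  set f : ℝ → X := fun r => S t r (y r) with hf
  -- continuity of y on [s, τ]
  have hycont : ContinuousOn y (Set.Icc s τ) := by
    have hcomp : ContinuousOn (fun r : ℝ => ((r, s) : ℝ × ℝ)) (Set.Icc s τ) :=
      (continuous_id.prodMk continuous_const).continuousOn
    refine (hQ_strong x).comp hcomp ?_
    intro r hr
    exact ⟨hs, hr.1, hr.2⟩
  -- continuity of f on [s, t)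
  have hfcont : ContinuousOn f (Set.Ico s t) := by
    intro r₀ hr₀
    set r₁ : ℝ := (r₀ + t) / 2 with hr₁
    have hr₀r₁ : r₀ < r₁ := by
      simp only [hr₁]; linarith [hr₀.2]
    have hr₁t : r₁ < t := by
      simp only [hr₁]; linarith [hr₀.2]
    set M : ℝ := N' * (t - r₁) ^ (-β) with hM
    have hMbound : ∀ r ∈ Set.Ico s r₁, ‖S t r‖ ≤ M := by
      intro r hr
      refine (hS_bound t r (hs.trans hr.1) (hr.2.trans hr₁t) htτ).trans ?_
      have h1 : (0:ℝ) < t - r₁ := by linarith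
      have h2 : t - r₁ ≤ t - r := by linarith [hr.2]
      exact mul_le_mul_of_nonneg_left
        (Real.rpow_le_rpow_of_nonpos h1 h2 (by linarith)) hN'.le
    set g : ℝ → X := fun r => S t r (y r₀) with hg
    have hgc : ContinuousWithinAt g (Set.Ico s t) r₀ := by
      refine ((hS_cont t (y r₀)) r₀ ⟨hs.trans hr₀.1, hr₀.2⟩).mono ?_
      intro r hr; exact ⟨hs.trans hr.1, hr.2⟩
    have hyc : ContinuousWithinAt y (Set.Ico s t) r₀ := by
      refine ((hycont r₀ ⟨hr₀.1, (hr₀.2.le.trans htτ)⟩)).mono ?_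
      intro r hr; exact ⟨hr.1, hr.2.le.trans htτ⟩
    have hdiff : Filter.Tendsto (fun r => f r - g r) (nhdsWithin r₀ (Set.Ico s t)) (nhds 0) := by
      have hbound : ∀ᶠ r in nhdsWithin r₀ (Set.Ico s t), ‖f r - g r‖ ≤ M * ‖y r - y r₀‖ := by
        have hmem : Set.Ico s t ∩ Set.Iio r₁ ∈ nhdsWithin r₀ (Set.Ico s t) :=
          inter_mem_nhdsWithin _ (Iio_mem_nhds hr₀r₁)
        refine Filter.eventually_of_mem hmem ?_
        intro r hr
        have : f r - g r = S t r (y r - y r₀) := by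
          simp [hf, hg, map_sub]
        rw [this]
        calc ‖S t r (y r - y r₀)‖ ≤ ‖S t r‖ * ‖y r - y r₀‖ := (S t r).le_opNorm _
          _ ≤ M * ‖y r - y r₀‖ := by
              exact mul_le_mul_of_nonneg_right (hMbound r ⟨hr.1.1, hr.2⟩) (norm_nonneg _)
      have hylim : Filter.Tendsto (fun r => M * ‖y r - y r₀‖) (nhdsWithin r₀ (Set.Ico s t))
          (nhds 0) := by
        have : Filter.Tendsto (fun r => y r - y r₀) (nhdsWithin r₀ (Set.Ico s t)) (nhds 0) := by
          simpa using hyc.tendsto.sub (tendsto_const_nhds (x := y r₀))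
        simpa using (this.norm.const_mul M)
      exact squeeze_zero_norm' hbound hylim
    have h2 : Filter.Tendsto f (nhdsWithin r₀ (Set.Ico s t)) (nhds (g r₀ + 0)) := by
      refine Filter.Tendsto.congr (fun r => ?_) (hgc.tendsto.add hdiff)
      abel
    simpa [ContinuousWithinAt, hf, hg] using h2
  -- the dominating function
  set c : ℝ := q * ‖x‖ * N' with hc
  have hc0 : 0 ≤ c := by positivity
  set g0 : ℝ → ℝ := fun r => c * (t - r) ^ (-β) with hg0
  have hg0int : IntervalIntegrable g0 volume s t := by
    have h1 : IntervalIntegrable (fun u : ℝ => u ^ (-β)) volume 0 (t - s) :=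
      intervalIntegral.intervalIntegrable_rpow' (by linarith)
    have h2 := (h1.comp_sub_left t).symm
    have h3 : IntervalIntegrable (fun r : ℝ => (t - r) ^ (-β)) volume s t := by
      simpa using h2
    simpa [hg0] using h3.const_mul c
  -- measure rewriting: restrict to Ioo
  have hmeas_eq : volume.restrict (Set.uIoc s t) = volume.restrict (Set.Ioo s t) := by
    rw [Set.uIoc_of_le hst.le]
    exact (Measure.restrict_congr_set Ioo_ae_eq_Ioc).symm
  have hfmeas : AEStronglyMeasurable f (volume.restrict (Set.uIoc s t)) := by
    rw [hmeas_eq]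
    exact (hfcont.mono (Set.Ioo_subset_Ico_self)).aestronglyMeasurable measurableSet_Ioo
  have hfle : ∀ᵐ r ∂volume.restrict (Set.uIoc s t), ‖f r‖ ≤ g0 r := by
    rw [hmeas_eq]
    refine (ae_restrict_mem measurableSet_Ioo).mono ?_
    intro r hr
    have hrs : s < r := hr.1
    have hrt : r < t := hr.2
    have hSr : ‖S t r‖ ≤ N' * (t - r) ^ (-β) := hS_bound t r (hs.trans hrs.le) hrt htτ
    have hQr : ‖Q r s‖ ≤ q := hQ_bound r s hs hrs.le (hrt.le.trans htτ)
    calc ‖f r‖ ≤ ‖S t r‖ * ‖y r‖ := (S t r).le_opNorm _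
      _ ≤ (N' * (t - r) ^ (-β)) * (q * ‖x‖) := by
          refine mul_le_mul hSr ?_ (norm_nonneg _)
            (mul_nonneg hN'.le (Real.rpow_nonneg (by linarith) _))
          calc ‖y r‖ ≤ ‖Q r s‖ * ‖x‖ := (Q r s).le_opNorm _
            _ ≤ q * ‖x‖ := mul_le_mul_of_nonneg_right hQr (norm_nonneg _)
      _ = g0 r := by simp [hg0, hc]; ring
  have hfint : IntervalIntegrable f volume s t := by
    refine hg0int.mono_fun' hfmeas ?_
    exact hfle
  refine ⟨hfint, ?_⟩
  -- value of dominating integral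
  have hint_val : (∫ r in s..t, g0 r) = c * ((t - s) ^ (1 - β) / (1 - β)) := by
    have h1 : (∫ r in s..t, ((t - r) ^ (-β) : ℝ)) = ∫ u in (0:ℝ)..(t - s), u ^ (-β) := by
      have := intervalIntegral.integral_comp_sub_left (a := s) (b := t)
        (fun u : ℝ => u ^ (-β)) t
      simpa using this
    have h2 : (∫ u in (0:ℝ)..(t - s), u ^ (-β)) = (t - s) ^ (1 - β) / (1 - β) := by
      rw [integral_rpow (Or.inl (by linarith))]
      rw [Real.zero_rpow (by linarith)]
      ring_nf
    simp only [hg0, intervalIntegral.integral_const_mul, h1, h2]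
  have hnormint : ‖∫ r in s..t, f r‖ ≤ c * ((t - s) ^ (1 - β) / (1 - β)) := by
    have := intervalIntegral.norm_integral_le_abs_of_norm_le hfle hg0int
    rw [hint_val] at this
    refine this.trans ?_
    rw [abs_of_nonneg (by positivity)]
  -- final arithmetic
  have hA : (0:ℝ) < (t - s) ^ (-β) := Real.rpow_pos_of_pos hts _
  have hfirst : ‖S t s x‖ ≤ N' * (t - s) ^ (-β) * ‖x‖ := by
    calc ‖S t s x‖ ≤ ‖S t s‖ * ‖x‖ := (S t s).le_opNorm _
      _ ≤ N' * (t - s) ^ (-β) * ‖x‖ :=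
          mul_le_mul_of_nonneg_right (hS_bound t s hs hst htτ) (norm_nonneg _)
  have hpow : (t - s) ^ (1 - β) = (t - s) ^ (-β) * (t - s) := by
    rw [show (1 - β) = -β + 1 by ring, Real.rpow_add hts, Real.rpow_one]
  have hsecond : c * ((t - s) ^ (1 - β) / (1 - β)) ≤
      q * τ * N' / (1 - β) * (t - s) ^ (-β) * ‖x‖ := by
    rw [hpow]
    have h1 : t - s ≤ τ := by linarith
    rw [hc]
    rw [div_eq_mul_inv, div_eq_mul_inv]
    have : q * ‖x‖ * N' * ((t - s) ^ (-β) * (t - s) * (1 - β)⁻¹)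
        = (q * (t - s) * N' * (1 - β)⁻¹) * (t - s) ^ (-β) * ‖x‖ := by ring
    rw [this]
    refine mul_le_mul_of_nonneg_right (mul_le_mul_of_nonneg_right ?_ hA.le) (norm_nonneg _)
    have hle : q * (t - s) ≤ q * τ := mul_le_mul_of_nonneg_left h1 hq
    have hinv : (0:ℝ) ≤ (1 - β)⁻¹ := by positivity
    calc q * (t - s) * N' * (1 - β)⁻¹ = (q * (t - s)) * (N' * (1 - β)⁻¹) := by ring
      _ ≤ (q * τ) * (N' * (1 - β)⁻¹) :=
          mul_le_mul_of_nonneg_right hle (mul_nonneg hN'.le hinv)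
      _ = q * τ * N' * (1 - β)⁻¹ := by ring
  calc ‖S t s x + ∫ r in s..t, f r‖ ≤ ‖S t s x‖ + ‖∫ r in s..t, f r‖ := norm_add_le _ _
    _ ≤ N' * (t - s) ^ (-β) * ‖x‖ + q * τ * N' / (1 - β) * (t - s) ^ (-β) * ‖x‖ :=
        add_le_add hfirst (hnormint.trans hsecond)
    _ ≤ ((1 + q * τ) * N' / (1 - β)) * (t - s) ^ (-β) * ‖x‖ := by
        have key : N' + q * τ * N' / (1 - β) ≤ (1 + q * τ) * N' / (1 - β) := by
          rw [le_div_iff₀ h1β]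
          have hdf : q * τ * N' / (1 - β) * (1 - β) = q * τ * N' :=
            div_mul_cancel₀ _ (ne_of_gt h1β)
          nlinarith [mul_nonneg (mul_nonneg hq hτ.le) hN'.le,
            mul_nonneg hβ0.le hN'.le]
        nlinarith [mul_nonneg hA.le (norm_nonneg x), mul_le_mul_of_nonneg_right key
          (mul_nonneg hA.le (norm_nonneg x))]
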